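/- Let R be a (not necessarily unital) commutative k-algebra such that either Ann(R) = {x ∈ R : x r = 0 for all r ∈ R} is zero or R·R = R (every element of R is a sum of products). Let M(R) be the set of k-linear maps δ : R → R with δ(r r') = r δ(r') for all r, r' ∈ R (the multiplication algebra of R). Then: (i) M(R) is closed under composition and is a commutative k-subalgebra of the k-linear endomorphisms of R; (ii) μ : R → M(R) defined by μ(r)(r') = r r' is a k-algebra morphism; (iii) with M(R) acting on R by δ·r = δ(r), the triple (R, M(R), μ) is a crossed module: δ·(r r') = (δ·r) r', μ(δ·r) = δ ∘ μ(r), and μ(r)·r' = r r' for all δ ∈ M(R) and r, r' ∈ R. -/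

import Mathlib

/-! Basic notions: (not necessarily unital) commutative `k`-algebra structures given by a raw
multiplication on a `k`-module, morphisms of such, actions, (pre)crossed modules and
2-crossed modules of commutative `k`-algebras, and their morphisms. -/

section Defs

variable (k : Type*) [CommRing k]

/-- A raw multiplication `mul` turns the `k`-module `A` into a (not necessarily unital)
commutative `k`-algebra. -/
structure IsCommAlgebraStr {A : Type*} [AddCommGroup A] [Module k A]
    (mul : A → A → A) : Prop where
  comm : ∀ x y, mul x y = mul y x
  assoc : ∀ x y z, mul (mul x y) z = mul x (mul y z)
  add_left : ∀ x y z, mul (x + y) z = mul x z + mul y z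
  add_right : ∀ x y z, mul x (y + z) = mul x y + mul x z
  smul_left : ∀ (a : k) (x y : A), mul (a • x) y = a • mul x y
  smul_right : ∀ (a : k) (x y : A), mul x (a • y) = a • mul x y

/-- `f` is a morphism of (not necessarily unital) commutative `k`-algebras from
`(A, mulA)` to `(B, mulB)`. -/
structure IsAlgHomStr {A B : Type*} [AddCommGroup A] [Module k A] [AddCommGroup B] [Module k B]
    (mulA : A → A → A) (mulB : B → B → B) (f : A → B) : Prop where
  map_add : ∀ x y, f (x + y) = f x + f y
  map_smul : ∀ (a : k) (x : A), f (a • x) = a • f x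
  map_mul : ∀ x y, f (mulA x y) = mulB (f x) (f y)

/-- `act` is a `k`-bilinear action of the algebra `(R, mulR)` on the algebra `(A, mulA)`
making `A` an `R`-module and satisfying `r · (x x') = (r · x) x'`. -/
structure IsActionStr {R A : Type*} [AddCommGroup R] [Module k R] [AddCommGroup A] [Module k A]
    (mulR : R → R → R) (mulA : A → A → A) (act : R → A → A) : Prop where
  add_left : ∀ (r r' : R) (x : A), act (r + r') x = act r x + act r' x
  add_right : ∀ (r : R) (x y : A), act r (x + y) = act r x + act r y
  smul_left : ∀ (a : k) (r : R) (x : A), act (a • r) x = a • act r x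
  smul_right : ∀ (a : k) (r : R) (x : A), act r (a • x) = a • act r x
  mul_act : ∀ (r r' : R) (x : A), act (mulR r r') x = act r (act r' x)
  act_mul : ∀ (r : R) (x y : A), act r (mulA x y) = mulA (act r x) y

/-- `(C, R, d)` is a pre-crossed module of commutative `k`-algebras with action `act`. -/
structure IsPreCrossedModule {C R : Type*} [AddCommGroup C] [Module k C]
    [AddCommGroup R] [Module k R]
    (mulC : C → C → C) (mulR : R → R → R) (d : C → R) (act : R → C → C) : Prop where
  algC : IsCommAlgebraStr k mulC
  algR : IsCommAlgebraStr k mulR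
  hom : IsAlgHomStr k mulC mulR d
  action : IsActionStr k mulR mulC act
  equivariant : ∀ (r : R) (c : C), d (act r c) = mulR r (d c)

/-- `(C, R, d)` is a crossed module of commutative `k`-algebras with action `act`. -/
structure IsCrossedModule {C R : Type*} [AddCommGroup C] [Module k C]
    [AddCommGroup R] [Module k R]
    (mulC : C → C → C) (mulR : R → R → R) (d : C → R) (act : R → C → C)
    extends IsPreCrossedModule k mulC mulR d act : Prop where
  peiffer : ∀ c c' : C, act (d c) c' = mulC c c'

/-- `{L, M, P, d2, d1}` is a 2-crossed module of commutative `k`-algebras, with `P`-actions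
`actL`, `actM` on `L` and `M` and Peiffer lifting `pf`. -/
structure IsTwoCrossedModule {L M P : Type*} [AddCommGroup L] [Module k L]
    [AddCommGroup M] [Module k M] [AddCommGroup P] [Module k P]
    (mulL : L → L → L) (mulM : M → M → M) (mulP : P → P → P)
    (d2 : L → M) (d1 : M → P)
    (actL : P → L → L) (actM : P → M → M)
    (pf : M → M → L) : Prop where
  algL : IsCommAlgebraStr k mulL
  algM : IsCommAlgebraStr k mulM
  algP : IsCommAlgebraStr k mulP
  homD2 : IsAlgHomStr k mulL mulM d2
  homD1 : IsAlgHomStr k mulM mulP d1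
  d1_d2 : ∀ l : L, d1 (d2 l) = 0
  actionL : IsActionStr k mulP mulL actL
  actionM : IsActionStr k mulP mulM actM
  d2_equivariant : ∀ (p : P) (l : L), d2 (actL p l) = actM p (d2 l)
  d1_equivariant : ∀ (p : P) (m : M), d1 (actM p m) = mulP p (d1 m)
  pf_add_left : ∀ m m' m'' : M, pf (m + m') m'' = pf m m'' + pf m' m''
  pf_add_right : ∀ m m' m'' : M, pf m (m' + m'') = pf m m' + pf m m''
  pf_smul_left : ∀ (a : k) (m m' : M), pf (a • m) m' = a • pf m m'
  pf_smul_right : ∀ (a : k) (m m' : M), pf m (a • m') = a • pf m m'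
  pl1 : ∀ m₀ m₁ : M, d2 (pf m₀ m₁) = mulM m₀ m₁ - actM (d1 m₁) m₀
  pl2 : ∀ l₀ l₁ : L, pf (d2 l₀) (d2 l₁) = mulL l₀ l₁
  pl3 : ∀ m₀ m₁ m₂ : M, pf m₀ (mulM m₁ m₂) = pf (mulM m₀ m₁) m₂ + actL (d1 m₂) (pf m₀ m₁)
  pl4 : ∀ (m : M) (l : L), pf m (d2 l) + pf (d2 l) m = actL (d1 m) l
  pl5_left : ∀ (p : P) (m₀ m₁ : M), actL p (pf m₀ m₁) = pf (actM p m₀) m₁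
  pl5_right : ∀ (p : P) (m₀ m₁ : M), actL p (pf m₀ m₁) = pf m₀ (actM p m₁)

/-- `(f₂, f₁, f₀)` is a morphism of 2-crossed modules of commutative `k`-algebras. -/
structure IsTwoCrossedModuleHom {L M P L' M' P' : Type*}
    [AddCommGroup L] [Module k L] [AddCommGroup M] [Module k M] [AddCommGroup P] [Module k P]
    [AddCommGroup L'] [Module k L'] [AddCommGroup M'] [Module k M']
    [AddCommGroup P'] [Module k P']
    (mulL : L → L → L) (mulM : M → M → M) (mulP : P → P → P)
    (d2 : L → M) (d1 : M → P) (actL : P → L → L) (actM : P → M → M) (pf : M → M → L)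
    (mulL' : L' → L' → L') (mulM' : M' → M' → M') (mulP' : P' → P' → P')
    (d2' : L' → M') (d1' : M' → P') (actL' : P' → L' → L') (actM' : P' → M' → M')
    (pf' : M' → M' → L')
    (f₂ : L → L') (f₁ : M → M') (f₀ : P → P') : Prop where
  homF2 : IsAlgHomStr k mulL mulL' f₂
  homF1 : IsAlgHomStr k mulM mulM' f₁
  homF0 : IsAlgHomStr k mulP mulP' f₀
  comm_d2 : ∀ l : L, f₁ (d2 l) = d2' (f₂ l)
  comm_d1 : ∀ m : M, f₀ (d1 m) = d1' (f₁ m)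
  comm_actL : ∀ (p : P) (l : L), f₂ (actL p l) = actL' (f₀ p) (f₂ l)
  comm_actM : ∀ (p : P) (m : M), f₁ (actM p m) = actM' (f₀ p) (f₁ m)
  comm_pf : ∀ m m' : M, f₂ (pf m m') = pf' (f₁ m) (f₁ m')

end Defs

/-- Let `R` be a (not necessarily unital) commutative `k`-algebra with
`Ann(R) = 0` or `R·R = R`, and let `M(R)` be its multiplication algebra, the set of `k`-linear
maps `δ : R → R` with `δ(r r') = r δ(r')`. Then (i) `M(R)` is a commutative `k`-subalgebra of
the `k`-linear endomorphisms of `R` (in particular closed under composition);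
(ii) `μ : R → M(R)`, `μ(r)(r') = r r'`, is a `k`-algebra morphism; (iii) with `M(R)` acting on
`R` by `δ · r = δ(r)`, the triple `(R, M(R), μ)` is a crossed module:
`δ · (r r') = (δ · r) r'`, `μ(δ · r) = δ ∘ μ(r)` and `μ(r) · r' = r r'`. -/
theorem statement2 {k R : Type*} [CommRing k] [AddCommGroup R] [Module k R]
    (mulR : R → R → R) (hR : IsCommAlgebraStr k mulR)
    (hcond : (∀ x : R, (∀ r : R, mulR x r = 0) → x = 0)
      ∨ (∀ x : R, x ∈ AddSubgroup.closure {y : R | ∃ a b : R, y = mulR a b}))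
    (MR : Set (Module.End k R)) (hMR : MR = {δ | ∀ r r' : R, δ (mulR r r') = mulR r (δ r')})
    (μ : R → Module.End k R) (hμ : ∀ r r' : R, μ r r' = mulR r r') :
    (∃ A : Subalgebra k (Module.End k R), (A : Set (Module.End k R)) = MR)
    ∧ (∀ δ ∈ MR, ∀ δ' ∈ MR, (δ * δ' : Module.End k R) ∈ MR ∧ δ * δ' = δ' * δ)
    ∧ (∀ r : R, μ r ∈ MR)
    ∧ (∀ r r' : R, μ (r + r') = μ r + μ r')
    ∧ (∀ (a : k) (r : R), μ (a • r) = a • μ r)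
    ∧ (∀ r r' : R, μ (mulR r r') = μ r * μ r')
    ∧ (∀ δ ∈ MR, ∀ r r' : R, δ (mulR r r') = mulR (δ r) r')
    ∧ (∀ δ ∈ MR, ∀ r : R, μ (δ r) = δ * μ r)
    ∧ (∀ r r' : R, μ r r' = mulR r r') := by
  subst hMR
  -- basic consequences
  have left : ∀ δ : Module.End k R, (∀ r r' : R, δ (mulR r r') = mulR r (δ r')) →
      ∀ r r' : R, δ (mulR r r') = mulR (δ r) r' := by
    intro δ h r r'
    rw [hR.comm r r', h, hR.comm]
  have mul_zero' : ∀ r : R, mulR r 0 = 0 := by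
    intro r
    have h := hR.smul_right (0 : k) r 0
    simpa using h
  have prodc : ∀ δ δ' : Module.End k R,
      (∀ r r' : R, δ (mulR r r') = mulR r (δ r')) →
      (∀ r r' : R, δ' (mulR r r') = mulR r (δ' r')) →
      ∀ a b : R, δ (δ' (mulR a b)) = δ' (δ (mulR a b)) := by
    intro δ δ' hδ hδ' a b
    rw [hδ' a b, left δ hδ a (δ' b), left δ hδ a b, hδ' (δ a) b]
  have commk : ∀ δ δ' : Module.End k R,
      (∀ r r' : R, δ (mulR r r') = mulR r (δ r')) →
      (∀ r r' : R, δ' (mulR r r') = mulR r (δ' r')) →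
      ∀ x : R, δ (δ' x) = δ' (δ x) := by
    intro δ δ' hδ hδ' x
    rcases hcond with hann | hgen
    · have hsub : ∀ a b r : R, mulR (a - b) r = mulR a r - mulR b r := by
        intro a b r
        rw [sub_eq_add_neg, ← neg_one_smul k b, hR.add_left, hR.smul_left, neg_one_smul,
          ← sub_eq_add_neg]
      have key : δ (δ' x) - δ' (δ x) = 0 := by
        apply hann
        intro r
        have h1 : mulR (δ (δ' x)) r = δ (δ' (mulR r x)) := by
          rw [hR.comm, ← hδ r (δ' x), ← hδ' r x]
        have h2 : mulR (δ' (δ x)) r = δ' (δ (mulR r x)) := by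
          rw [hR.comm, ← hδ' r (δ x), ← hδ r x]
        rw [hsub, h1, h2, prodc δ δ' hδ hδ' r x, sub_self]
      exact sub_eq_zero.mp key
    · have : ∀ y ∈ AddSubgroup.closure {y : R | ∃ a b : R, y = mulR a b},
          δ (δ' y) = δ' (δ y) := by
        intro y hy
        induction hy using AddSubgroup.closure_induction with
        | mem z hz =>
          obtain ⟨a, b, rfl⟩ := hz
          exact prodc δ δ' hδ hδ' a b
        | zero => simp
        | add a b _ _ ha hb => simp [map_add, ha, hb]
        | neg a _ ha => simp [map_neg, ha]
      exact this x (hgen x)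
  refine ⟨?_, ?_, ?_, ?_, ?_, ?_, ?_, ?_, hμ⟩
  · exact ⟨{ carrier := {δ : Module.End k R | ∀ r r' : R, δ (mulR r r') = mulR r (δ r')}
             add_mem' := fun {a b} ha hb r r' => by
               simp only [LinearMap.add_apply, ha r r', hb r r', hR.add_right]
             zero_mem' := fun r r' => by simp [mul_zero' r]
             one_mem' := fun r r' => rfl
             mul_mem' := fun {a b} ha hb r r' => by
               show a (b (mulR r r')) = mulR r (a (b r'))
               rw [hb r r', ha r (b r')]
             algebraMap_mem' := fun a r r' => by
               show (a • (1 : Module.End k R)) (mulR r r') =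
                 mulR r ((a • (1 : Module.End k R)) r')
               simp [hR.smul_right] }, rfl⟩
  · intro δ hδ δ' hδ'
    constructor
    · intro r r'
      show δ (δ' (mulR r r')) = mulR r (δ (δ' r'))
      rw [hδ' r r', hδ r (δ' r')]
    · ext x
      exact commk δ δ' hδ hδ' x
  · intro r a b
    rw [hμ, hμ, ← hR.assoc, hR.comm r a, hR.assoc]
  · intro r r'
    ext x
    simp [hμ, hR.add_left]
  · intro a r
    ext x
    simp [hμ, hR.smul_left]
  · intro r r'
    ext x
    show μ (mulR r r') x = μ r (μ r' x)
    rw [hμ, hμ, hμ, hR.assoc]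
  · intro δ hδ r r'
    exact left δ hδ r r'
  · intro δ hδ r
    ext x
    show μ (δ r) x = δ (μ r x)
    rw [hμ, hμ, left δ hδ r x]
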